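/- Let T and S be tables over disjoint attribute sets and let F = F' ∧ (x ∨ y) where predicate x depends only on attributes of S and y is an arbitrary predicate on joined tuples. Extend S to S' by adding a fresh boolean attribute p whose value on each tuple s of S is x(s) (propositional projection). Then σ_F(T ⋈ S) equals, after dropping the column p, σ_{F' ∧ (y ∨ (p = true))}(T ⋈ S'). -/
import Mathlib


/-- Rewrite rule with a propositional projection: for tables `T`, `S` over
disjoint attribute sets (joined tuples modeled as pairs), and
`F = F' ∧ (x ∨ y)` where `x` depends only on attributes of `S`, extend `S` to
`S'` by a fresh boolean column `p` recording the truth value of `x`.  Then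
`σ_F (T ⋈ S)` equals, after dropping the column `p`,
`σ_{F' ∧ (y ∨ p = true)} (T ⋈ S')`. -/
theorem stmt5 {α β V : Type*} (T : Set (α → V)) (S : Set (β → V))
    (hTfin : T.Finite) (hSfin : S.Finite)
    (F' y : (α → V) × (β → V) → Prop) (x : (β → V) → Prop) :
    {ts : (α → V) × (β → V) | ts ∈ T ×ˢ S ∧ (F' ts ∧ (x ts.2 ∨ y ts))} =
      (fun tsb : (α → V) × ((β → V) × Bool) => (tsb.1, tsb.2.1)) ''
        {tsb : (α → V) × ((β → V) × Bool) |
          tsb.1 ∈ T ∧ (tsb.2.1 ∈ S ∧ (tsb.2.2 = true ↔ x tsb.2.1)) ∧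
          (F' (tsb.1, tsb.2.1) ∧ (y (tsb.1, tsb.2.1) ∨ tsb.2.2 = true))} := by
  ext ⟨t, s⟩
  constructor
  · rintro ⟨⟨hT, hS⟩, hF, hxy⟩
    classical
    refine ⟨(t, s, decide (x s)), ⟨hT, ⟨hS, by simp⟩, hF, ?_⟩, rfl⟩
    rcases hxy with hx | hy
    · exact Or.inr (by simp [hx])
    · exact Or.inl hy
  · rintro ⟨⟨t', s', b⟩, ⟨hT, ⟨hS, hb⟩, hF, hyb⟩, heq⟩
    obtain ⟨rfl, rfl⟩ : t' = t ∧ s' = s := by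
      simpa [Prod.ext_iff] using heq
    refine ⟨⟨hT, hS⟩, hF, ?_⟩
    rcases hyb with hy | hb'
    · exact Or.inr hy
    · exact Or.inl (hb.mp hb')
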